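/- Fix a real a > 0 and define 𝒰(z, a) := z·B(z, 1 + a) (B the Euler Beta function). Then, as z → ∞, (1 − 𝒰(z, a))² − (1 − 𝒰(z, a)/2 − 𝒰(z, 2a))⁴ = O(z^{−2a}); that is, there exist constants C > 0 and z₀ > 0 such that |(1 − 𝒰(z, a))² − (1 − 𝒰(z, a)/2 − 𝒰(z, 2a))⁴| ≤ C·z^{−2a} for all z ≥ z₀. -/

import Mathlib

/-- Euler Beta function `B(p, q) = Γ(p)Γ(q)/Γ(p+q)`. -/
noncomputable def eulerBeta (p q : ℝ) : ℝ :=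
  Real.Gamma p * Real.Gamma q / Real.Gamma (p + q)

/-- `𝒰(z, a) := z·B(z, 1 + a)`. -/
noncomputable def Ufun (z a : ℝ) : ℝ := z * eulerBeta z (1 + a)

lemma gamma_lb : ∀ n : ℕ, ∀ a : ℝ, 0 ≤ a → a ≤ n → ∀ z : ℝ, 1 ≤ z →
    Real.Gamma (z + 1) * z ^ a ≤ Real.Gamma (z + 1 + a) := by
  intro n
  induction n with
  | zero =>
    intro a h0 h1 z hz
    have : a = 0 := le_antisymm (by simpa using h1) h0
    simp [this]
  | succ n ih =>
    intro a h0 h1 z hz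
    have hz0 : (0:ℝ) < z := by linarith
    by_cases hle : a ≤ 1
    · rcases eq_or_lt_of_le h0 with h0' | h0'
      · simp [← h0']
      rcases eq_or_lt_of_le hle with h1' | h1'
      · subst h1'
        have : Real.Gamma (z + 1 + 1) = (z + 1) * Real.Gamma (z + 1) :=
          Real.Gamma_add_one (by positivity)
        rw [this, Real.rpow_one]
        have hg : 0 < Real.Gamma (z + 1) := Real.Gamma_pos_of_pos (by linarith)
        nlinarith
      · have hkey := Real.Gamma_mul_add_mul_le_rpow_Gamma_mul_rpow_Gamma
          (s := z + 1 + a) (t := z + a) (a := 1 - a) (b := a)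
          (by linarith) (by linarith) (by linarith) h0' (by ring)
        have harg : (1 - a) * (z + 1 + a) + a * (z + a) = z + 1 := by ring
        rw [harg] at hkey
        have hza : (0:ℝ) < z + a := by linarith
        have hgt : Real.Gamma (z + a) = Real.Gamma (z + 1 + a) / (z + a) := by
          have := Real.Gamma_add_one (s := z + a) (by positivity)
          have h2 : z + a + 1 = z + 1 + a := by ring
          rw [h2] at this
          field_simp [this]; exact this.symm
        have hgpos : 0 < Real.Gamma (z + 1 + a) := Real.Gamma_pos_of_pos (by linarith)
        rw [hgt, Real.div_rpow hgpos.le hza.le] at hkey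
        have hcomb : Real.Gamma (z+1+a) ^ (1 - a) * (Real.Gamma (z+1+a) ^ a / (z+a) ^ a)
            = Real.Gamma (z+1+a) / (z+a) ^ a := by
          rw [mul_div_assoc', ← Real.rpow_add hgpos]
          norm_num
        rw [hcomb] at hkey
        have hzza : z ^ a ≤ (z + a) ^ a := Real.rpow_le_rpow hz0.le (by linarith) h0
        have hpa : 0 < (z + a) ^ a := Real.rpow_pos_of_pos hza a
        have hzap : 0 < z ^ a := Real.rpow_pos_of_pos hz0 a
        have h2 := mul_le_mul_of_nonneg_right hkey hzap.le
        rw [div_mul_eq_mul_div] at h2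
        have h3 : Real.Gamma (z + 1 + a) * z ^ a / (z + a) ^ a ≤ Real.Gamma (z + 1 + a) := by
          rw [div_le_iff₀ hpa]
          nlinarith [mul_le_mul_of_nonneg_left hzza hgpos.le]
        linarith
    · have ha1 : 1 < a := lt_of_not_ge hle
      have h := ih (a - 1) (by linarith) (by push_cast at h1 ⊢; linarith) z hz
      have hg : 0 < Real.Gamma (z + 1 + (a - 1)) := Real.Gamma_pos_of_pos (by linarith)
      have hstep : Real.Gamma (z + 1 + a) = (z + 1 + (a - 1)) * Real.Gamma (z + 1 + (a - 1)) := by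
        rw [show z + 1 + a = (z + 1 + (a - 1)) + 1 by ring,
          Real.Gamma_add_one (by nlinarith : z + 1 + (a - 1) ≠ 0)]
      have hrp : z ^ a = z ^ (a - 1) * z := by
        rw [← Real.rpow_add_one hz0.ne']; ring_nf
      have hzp : 0 < z ^ (a - 1) := Real.rpow_pos_of_pos hz0 _
      have hg1 : 0 < Real.Gamma (z + 1) := Real.Gamma_pos_of_pos (by linarith)
      rw [hstep, hrp]
      nlinarith

lemma Ufun_bounds (a z : ℝ) (ha : 0 < a) (hz : 1 ≤ z)
    (hlb : Real.Gamma (z + 1) * z ^ a ≤ Real.Gamma (z + 1 + a)) :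
    0 ≤ Ufun z a ∧ Ufun z a ≤ Real.Gamma (1 + a) * z ^ (-a) := by
  have hz0 : (0:ℝ) < z := by linarith
  have hU : Ufun z a = Real.Gamma (z + 1) * Real.Gamma (1 + a) / Real.Gamma (z + 1 + a) := by
    unfold Ufun eulerBeta
    rw [Real.Gamma_add_one hz0.ne', show z + (1 + a) = z + 1 + a by ring]
    ring
  have hg1 : 0 < Real.Gamma (z + 1) := Real.Gamma_pos_of_pos (by linarith)
  have hga : 0 < Real.Gamma (1 + a) := Real.Gamma_pos_of_pos (by linarith)
  have hgz : 0 < Real.Gamma (z + 1 + a) := Real.Gamma_pos_of_pos (by linarith)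
  have hzp : 0 < z ^ a := Real.rpow_pos_of_pos hz0 a
  constructor
  · rw [hU]; positivity
  · rw [hU, div_le_iff₀ hgz, Real.rpow_neg hz0.le]
    calc Real.Gamma (z+1) * Real.Gamma (1+a)
        = Real.Gamma (1+a) * (z ^ a)⁻¹ * (Real.Gamma (z+1) * z ^ a) := by
          field_simp
      _ ≤ Real.Gamma (1+a) * (z ^ a)⁻¹ * Real.Gamma (z + 1 + a) :=
          mul_le_mul_of_nonneg_left hlb (by positivity)

set_option maxHeartbeats 800000 in
/-- As `z → ∞`,
`(1 − 𝒰(z, a))² − (1 − 𝒰(z, a)/2 − 𝒰(z, 2a))⁴ = O(z^{−2a})`. -/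
theorem stmt_14 (a : ℝ) (ha : 0 < a) :
    ∃ C > (0 : ℝ), ∃ z₀ > (0 : ℝ), ∀ z ≥ z₀,
      |(1 - Ufun z a) ^ 2 - (1 - Ufun z a / 2 - Ufun z (2 * a)) ^ 4| ≤
        C * z ^ (-(2 * a)) := by
  set C₁ := Real.Gamma (1 + a) with hC₁def
  set C₂ := Real.Gamma (1 + 2 * a) with hC₂def
  have hC₁ : 0 < C₁ := Real.Gamma_pos_of_pos (by linarith)
  have hC₂ : 0 < C₂ := Real.Gamma_pos_of_pos (by linarith)
  set D : ℝ := C₁ / 2 + C₂ with hDdef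
  have hD : 0 < D := by positivity
  refine ⟨C₁^2 + 4*C₂ + 6*D^2 + 4*D^3 + D^4 + 1, by positivity, 1, one_pos, ?_⟩
  intro z hz
  have hz0 : (0:ℝ) < z := by linarith
  set u : ℝ := z ^ (-a) with hudef
  have hu0 : 0 < u := Real.rpow_pos_of_pos hz0 _
  have hu1 : u ≤ 1 := Real.rpow_le_one_of_one_le_of_nonpos hz (by linarith)
  have hu2 : z ^ (-(2 * a)) = u * u := by
    rw [hudef, show -(2*a) = -a + -a by ring, Real.rpow_add hz0]
  have hx := Ufun_bounds a z ha hz (gamma_lb ⌈a⌉₊ a ha.le (Nat.le_ceil a) z hz)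
  have hy := Ufun_bounds (2*a) z (by linarith) hz
    (gamma_lb ⌈2*a⌉₊ (2*a) (by linarith) (Nat.le_ceil _) z hz)
  set x := Ufun z a
  set y := Ufun z (2*a)
  obtain ⟨hx0, hx1⟩ := hx
  obtain ⟨hy0, hy1⟩ := hy
  rw [← hudef] at hx1
  rw [hu2] at hy1 ⊢
  rw [← hC₁def] at hx1
  rw [← hC₂def] at hy1
  -- hx1 : x ≤ C₁ * u,  hy1 : y ≤ C₂ * (u * u)
  clear_value x y
  set s : ℝ := x / 2 + y with hsdef
  clear_value C₁ C₂ D u s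
  have hs0 : 0 ≤ s := by rw [hsdef]; positivity
  have hsD : s ≤ D * u := by rw [hsdef, hDdef]; nlinarith
  have hE : (1 - x) ^ 2 - (1 - x / 2 - y) ^ 4
      = x^2 + 4*y - 6*s^2 + 4*s^3 - s^4 := by rw [hsdef]; ring
  have hm2 : x^2 ≤ C₁^2 * (u*u) := by
    rw [pow_two]
    calc x * x ≤ (C₁*u) * (C₁*u) := mul_le_mul hx1 hx1 hx0 (by positivity)
      _ = C₁^2 * (u*u) := by ring
  have hm3 : s^2 ≤ D^2 * (u*u) := by
    rw [pow_two]
    calc s * s ≤ (D*u) * (D*u) := mul_le_mul hsD hsD hs0 (by positivity)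
      _ = D^2 * (u*u) := by ring
  have huu1 : u * u ≤ 1 := by nlinarith
  have hm4 : s^3 ≤ D^3 * (u*u) := by
    calc s^3 ≤ (D*u)^3 := pow_le_pow_left₀ hs0 hsD 3
      _ = (D^3 * (u*u)) * u := by ring
      _ ≤ (D^3 * (u*u)) * 1 := mul_le_mul_of_nonneg_left hu1 (by positivity)
      _ = D^3 * (u*u) := by ring
  have hm5 : s^4 ≤ D^4 * (u*u) := by
    calc s^4 ≤ (D*u)^4 := pow_le_pow_left₀ hs0 hsD 4
      _ = (D^4 * (u*u)) * (u*u) := by ring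
      _ ≤ (D^4 * (u*u)) * 1 := mul_le_mul_of_nonneg_left huu1 (by positivity)
      _ = D^4 * (u*u) := by ring
  have hn2 : 0 ≤ x^2 := by positivity
  have hn3 : 0 ≤ s^3 := by positivity
  have hn4 : 0 ≤ s^2 := by positivity
  have hn5 : 0 ≤ s^4 := by positivity
  have hq1 : 0 ≤ C₁^2 * (u*u) := by positivity
  have hq2 : 0 ≤ C₂ * (u*u) := by positivity
  have hq3 : 0 ≤ D^2 * (u*u) := by positivity
  have hq4 : 0 ≤ D^3 * (u*u) := by positivity
  have hq5 : 0 ≤ D^4 * (u*u) := by positivity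
  have hq6 : 0 ≤ u * u := by positivity
  rw [hE, abs_le]
  constructor
  · linarith
  · linarith
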